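/- Let d be a finite-dimensional Lie algebra with basis {∂_i} and structure constants c_{ij}^k, H = U(d), X = H* with left action ⟨∂x, h⟩ = -⟨x, ∂h⟩. Let x^j ∈ X be dual to ∂_j with respect to the PBW basis. Then ∂_i x^j ≡ -δ_i^j - Σ_{k<i} c_{ik}^j x^k modulo F_1 X, where F_1 X is the subspace of functionals vanishing on the degree-≤1 part of U(d). -/

import Mathlib

open TensorProduct UniversalEnvelopingAlgebra

lemma prodOne' {M : Type*} [Monoid M] {N : ℕ} (f : Fin N → M) (I : Fin N → ℕ)
    (h : ∀ t, I t = 0) : (List.ofFn fun t => f t ^ I t).prod = 1 := by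
  apply List.prod_eq_one
  intro x hx
  rw [List.mem_ofFn] at hx
  obtain ⟨t, rfl⟩ := hx
  simp [h t]

lemma prodSingle' {M : Type*} [Monoid M] : ∀ {N : ℕ} (f : Fin N → M) (I : Fin N → ℕ)
    (m : Fin N), (∀ t, I t = if t = m then 1 else 0) →
    (List.ofFn fun t => f t ^ I t).prod = f m := by
  intro N
  induction N with
  | zero => exact fun f I m _ => m.elim0
  | succ n ih =>
    intro f I m hI
    rw [List.ofFn_succ, List.prod_cons]
    by_cases hm : m = 0
    · subst hm
      rw [prodOne' (fun t => f t.succ) (fun t => I t.succ)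
        (fun t => by simp [hI t.succ, Fin.succ_ne_zero]), mul_one, hI 0]
      simp
    · obtain ⟨m', rfl⟩ := Fin.eq_succ_of_ne_zero hm
      rw [ih (fun t => f t.succ) (fun t => I t.succ) m'
        (fun t => by simp only [hI t.succ]; simp [Fin.succ_inj]), hI 0]
      simp [(Fin.succ_ne_zero m').symm]

lemma prodPair' {M : Type*} [Monoid M] : ∀ {N : ℕ} (f : Fin N → M) (I : Fin N → ℕ)
    (n i : Fin N), n ≤ i →
    (∀ t, I t = (if t = n then 1 else 0) + (if t = i then 1 else 0)) →
    (List.ofFn fun t => f t ^ I t).prod = f n * f i := by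
  intro N
  induction N with
  | zero => exact fun f I n i _ _ => n.elim0
  | succ nn ih =>
    intro f I n i hni hI
    rw [List.ofFn_succ, List.prod_cons]
    by_cases hn : n = 0
    · subst hn
      by_cases hi : i = 0
      · subst hi
        rw [prodOne' (fun t => f t.succ) (fun t => I t.succ)
          (fun t => by simp [hI t.succ, Fin.succ_ne_zero]), mul_one, hI 0]
        simp [sq]
      · obtain ⟨i', rfl⟩ := Fin.eq_succ_of_ne_zero hi
        rw [prodSingle' (fun t => f t.succ) (fun t => I t.succ) i'
          (fun t => by simp only [hI t.succ]; simp [Fin.succ_ne_zero, Fin.succ_inj]), hI 0]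
        simp [(Fin.succ_ne_zero i').symm, mul_assoc]
    · have hi : i ≠ 0 := fun h => hn (le_antisymm (h ▸ hni) (Fin.zero_le n))
      obtain ⟨n', rfl⟩ := Fin.eq_succ_of_ne_zero hn
      obtain ⟨i', rfl⟩ := Fin.eq_succ_of_ne_zero hi
      rw [ih (fun t => f t.succ) (fun t => I t.succ) n' i' (by simpa using hni)
        (fun t => by simp only [hI t.succ]; simp [Fin.succ_inj]), hI 0]
      simp [(Fin.succ_ne_zero n').symm, (Fin.succ_ne_zero i').symm]

/-- With `H = U(𝔡)`, PBW basis `∂^(I)` and dual elements `x^j ∈ X = H*`,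
and the left action `⟨a·x, f⟩ = -⟨x, af⟩` of `𝔡` on `X`, one has
`∂ᵢ x^j ≡ -δᵢ^j - ∑_{m<i} c_{im}^j x^m` modulo `F₁X`, the annihilator of the
degree-`≤1` part of `U(𝔡)`.  Here `-δᵢ^j` denotes `-δᵢ^j` times the functional dual
to the basis element `1 = ∂^(0)`. -/
theorem stmt4 (k : Type*) [Field k] [CharZero k]
    (d : Type*) [LieRing d] [LieAlgebra k d]
    (N : ℕ) (P : Module.Basis (Fin N) k d)
    (c : Fin N → Fin N → Fin N → k)
    (hc : ∀ i j : Fin N, ⁅P i, P j⁆ = ∑ m, c i j m • P m)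
    (B : Module.Basis (Fin N → ℕ) k (UniversalEnvelopingAlgebra k d))
    (hB : ∀ I : Fin N → ℕ,
      B I = ((∏ i, Nat.factorial (I i) : ℕ) : k)⁻¹ •
        (List.ofFn (fun i : Fin N => (ι k (P i)) ^ (I i))).prod)
    (i j : Fin N) :
    (-(B.coord (Pi.single j 1) ∘ₗ LinearMap.mulLeft k (ι k (P i))))
      - (-((if i = j then (1:k) else 0) • B.coord 0)
         - ∑ m ∈ Finset.univ.filter (fun m : Fin N => m < i),
            c i m j • B.coord (Pi.single m 1))
      ∈ (Submodule.span k ({(1 : UniversalEnvelopingAlgebra k d)}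
          ∪ Set.range (fun a : d => ι k a))).dualAnnihilator := by
  -- basic coordinate facts
  have coordB : ∀ J I : Fin N → ℕ, B.coord J (B I) = if I = J then 1 else 0 := by
    intro J I
    rw [Module.Basis.coord_apply, B.repr_self, Finsupp.single_apply]
  -- B 0 = 1
  have hB0 : B 0 = 1 := by
    rw [hB 0]
    simp only [Pi.zero_apply, Nat.factorial_zero, Finset.prod_const_one, Nat.cast_one, inv_one,
      one_smul]
    exact prodOne' _ _ (fun t => rfl)
  -- B (single m 1) = ι (P m)
  have hB1 : ∀ m : Fin N, B (Pi.single m 1) = ι k (P m) := by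
    intro m
    rw [hB (Pi.single m 1)]
    have hf : (∏ t, Nat.factorial ((Pi.single m 1 : Fin N → ℕ) t)) = 1 := by
      apply Finset.prod_eq_one
      intro t _
      rw [Pi.single_apply]
      split <;> rfl
    rw [hf, prodSingle' (fun t => ι k (P t)) (Pi.single m 1) m (fun t => Pi.single_apply m 1 t)]
    simp
  -- products of two generators
  have hB2 : ∀ n i' : Fin N, n ≤ i' →
      ι k (P n) * ι k (P i') =
        ((∏ t, Nat.factorial ((Pi.single n 1 + Pi.single i' 1 : Fin N → ℕ) t) : ℕ) : k) •
          B (Pi.single n 1 + Pi.single i' 1) := by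
    intro n i' hni
    set J : Fin N → ℕ := Pi.single n 1 + Pi.single i' 1 with hJ
    have hprod : (List.ofFn fun t => ι k (P t) ^ J t).prod = ι k (P n) * ι k (P i') := by
      apply prodPair' _ _ n i' hni
      intro t
      simp [hJ, Pi.single_apply]
    have hCne : ((∏ t, Nat.factorial (J t) : ℕ) : k) ≠ 0 := by
      rw [Nat.cast_ne_zero]
      exact Finset.prod_ne_zero_iff.mpr (fun t _ => (Nat.factorial_pos _).ne')
    rw [hB J, hprod, smul_smul, mul_inv_cancel₀ hCne, one_smul]
  -- single multi-indices are distinct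
  have hsingle_inj : ∀ a b : Fin N, (Pi.single a 1 : Fin N → ℕ) = Pi.single b 1 ↔ a = b := by
    intro a b
    constructor
    · intro h
      have := congrFun h a
      simp [Pi.single_apply] at this
      by_contra hab
      simp [hab] at this
    · rintro rfl; rfl
  have hzero_ne : ∀ m : Fin N, (Pi.single m 1 : Fin N → ℕ) ≠ 0 := by
    intro m h
    have := congrFun h m
    simp at this
  have hpair_ne : ∀ n i' m : Fin N,
      (Pi.single n 1 + Pi.single i' 1 : Fin N → ℕ) ≠ Pi.single m 1 := by
    intro n i' m h
    have hsum := congrArg (fun f : Fin N → ℕ => ∑ t, f t) h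
    simp only [Pi.add_apply, Finset.sum_add_distrib, Finset.sum_pi_single',
      Finset.mem_univ, if_true] at hsum
    omega
  -- coordinates of ι (P n)
  have hcoord0 : ∀ n : Fin N, B.coord 0 (ι k (P n)) = 0 := by
    intro n
    rw [← hB1 n, coordB]
    simp [hzero_ne n]
  have hcoordS : ∀ m n : Fin N, B.coord (Pi.single m 1) (ι k (P n)) =
      if n = m then 1 else 0 := by
    intro m n
    rw [← hB1 n, coordB]
    simp [hsingle_inj]
  -- key: evaluation on ι (P n) of the main composite
  have hmain : ∀ n : Fin N, B.coord (Pi.single j 1) (ι k (P i) * ι k (P n)) =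
      if n ≤ i then c i n j else 0 := by
    intro n
    letI : LieRing (UniversalEnvelopingAlgebra k d) := LieRing.ofAssociativeRing
    rcases le_or_gt n i with hni | hni
    · have hlie : ι k (P i) * ι k (P n) =
          ι k (P n) * ι k (P i) + ι k ⁅P i, P n⁆ := by
        rw [LieHom.map_lie, Ring.lie_def, add_sub_cancel]
      rw [hlie, map_add, hB2 n i hni, map_smul, coordB, if_neg (hpair_ne n i j), smul_zero,
        zero_add, hc i n]
      rw [show ((ι k : d →ₗ⁅k⁆ UniversalEnvelopingAlgebra k d) (∑ m, c i n m • P m))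
          = ∑ m, c i n m • ι k (P m) from by
        rw [← LieHom.coe_toLinearMap, map_sum]; simp only [map_smul, LieHom.coe_toLinearMap]]
      rw [map_sum]
      simp only [map_smul, hcoordS, smul_eq_mul, mul_ite, mul_one, mul_zero]
      rw [Finset.sum_ite_eq' Finset.univ j (fun m => c i n m)]
      simp [hni]
    · rw [hB2 i n hni.le, map_smul, coordB, if_neg (hpair_ne i n j), smul_zero,
        if_neg (not_le.mpr hni)]
  have hcii : c i i j = 0 := by
    have h0 : ∑ m, c i i m • P m = 0 := by rw [← hc i i, lie_self]
    exact Fintype.linearIndependent_iff.mp P.linearIndependent (fun m => c i i m) h0 j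
  set φ := (-(B.coord (Pi.single j 1) ∘ₗ LinearMap.mulLeft k (ι k (P i))))
      - (-((if i = j then (1:k) else 0) • B.coord 0)
         - ∑ m ∈ Finset.univ.filter (fun m : Fin N => m < i),
            c i m j • B.coord (Pi.single m 1)) with hφ
  have hφ1 : φ 1 = 0 := by
    rw [hφ]
    simp only [LinearMap.sub_apply, LinearMap.neg_apply, LinearMap.comp_apply,
      LinearMap.mulLeft_apply, LinearMap.smul_apply, LinearMap.coe_sum, Finset.sum_apply]
    rw [mul_one]
    have h1 : B.coord (Pi.single j 1) (ι k (P i)) = if i = j then 1 else 0 := by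
      rw [← hB1 i, coordB]; simp [hsingle_inj]
    have h2 : B.coord 0 (1 : UniversalEnvelopingAlgebra k d) = 1 := by
      rw [← hB0, coordB]; simp
    have h3 : ∀ m : Fin N, B.coord (Pi.single m 1) (1 : UniversalEnvelopingAlgebra k d) = 0 := by
      intro m
      rw [← hB0, coordB]
      simp [(hzero_ne m).symm]
    rw [h1, h2]
    simp [h3]
  have hφι : ∀ a : d, φ (ι k a) = 0 := by
    have hφn : ∀ n : Fin N, φ (ι k (P n)) = 0 := by
      intro n
      rw [hφ]
      simp only [LinearMap.sub_apply, LinearMap.neg_apply, LinearMap.comp_apply,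
        LinearMap.mulLeft_apply, LinearMap.smul_apply, LinearMap.coe_sum, Finset.sum_apply]
      rw [hmain n, hcoord0 n]
      simp only [hcoordS, smul_eq_mul, mul_ite, mul_one, mul_zero, smul_zero]
      rw [Finset.sum_ite_eq (Finset.univ.filter (fun m : Fin N => m < i)) n
        (fun m => c i m j)]
      simp only [Finset.mem_filter, Finset.mem_univ, true_and]
      rcases lt_trichotomy n i with h | h | h
      · simp [h, h.le]
      · subst h; simp [hcii]
      · simp [not_le.mpr h, not_lt.mpr h.le]
    intro a
    letI : LieRing (UniversalEnvelopingAlgebra k d) := LieRing.ofAssociativeRing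
    have hφcomp : (φ ∘ₗ (ι k : d →ₗ⁅k⁆ UniversalEnvelopingAlgebra k d).toLinearMap) = 0 :=
      P.ext fun n => by simpa using hφn n
    have := LinearMap.congr_fun hφcomp a
    simpa using this
  rw [Submodule.mem_dualAnnihilator]
  intro w hw
  induction hw using Submodule.span_induction with
  | mem x hx =>
    rcases hx with hx | ⟨a, rfl⟩
    · rw [Set.mem_singleton_iff] at hx; subst hx; exact hφ1
    · exact hφι a
  | zero => simp
  | add x y _ _ hx hy => rw [map_add, hx, hy, add_zero]
  | smul t x _ hx => rw [map_smul, hx, smul_zero]
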